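/- Let K be an algebraically closed field of characteristic p > 0, f ∈ K[[x]] with f(0) = 0 and finite Milnor number μ. Consider the semiuniversal unfolding with trivial section f_t(x) = f(x) + Σ_{i=1}^{μ} t_i x^i over 𝔸^μ. Then the μ-constant stratum Σ_μ := {t ∈ 𝔸^μ : μ(f_t) = μ} equals {t : t_i = 0 for all i with p ∤ i}, and hence dim Σ_μ = ⌊μ/p⌋. -/

import Mathlib

open PowerSeries

noncomputable def milnor (K : Type*) [Field K] (f : PowerSeries K) : ℕ :=
  Module.finrank K (PowerSeries K ⧸ Ideal.span {f.derivativeFun})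

def MilnorFinite (K : Type*) [Field K] (f : PowerSeries K) : Prop :=
  Module.Finite K (PowerSeries K ⧸ Ideal.span {f.derivativeFun})

def RightEquiv (K : Type*) [Field K] (f g : PowerSeries K) : Prop :=
  ∃ Φ : PowerSeries K ≃ₐ[K] PowerSeries K, Φ f = g

section Aux

variable (K : Type*) [Field K]

lemma ker_coeffs (n : ℕ) :
    LinearMap.ker (LinearMap.pi (fun k : Fin n => PowerSeries.coeff (R := K) (k:ℕ)))
      = (Ideal.span {(X:PowerSeries K)^n}).restrictScalars K := by
  ext f
  simp only [LinearMap.mem_ker, Submodule.restrictScalars_mem, Ideal.mem_span_singleton,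
    X_pow_dvd_iff, funext_iff, LinearMap.pi_apply, Pi.zero_apply]
  constructor
  · intro h m hm; exact h ⟨m, hm⟩
  · intro h k; exact h k k.2

lemma coeffs_surj (n : ℕ) :
    Function.Surjective (LinearMap.pi (fun k : Fin n => PowerSeries.coeff (R := K) (k:ℕ))) := by
  intro v
  refine ⟨∑ k : Fin n, C (v k) * X ^ (k:ℕ), ?_⟩
  ext j
  simp only [LinearMap.pi_apply, map_sum, coeff_C_mul, coeff_X_pow]
  rw [Finset.sum_eq_single j]
  · simp
  · intro b _ hb
    simp [Fin.val_eq_val, Ne.symm hb]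
  · simp

lemma finrank_quot_X_pow (n : ℕ) :
    Module.finrank K (PowerSeries K ⧸ Ideal.span {(X:PowerSeries K)^n}) = n := by
  have e1 := (Submodule.Quotient.restrictScalarsEquiv K
    ((Ideal.span {(X:PowerSeries K)^n}))).symm
  have e2 := (LinearMap.pi (fun k : Fin n => PowerSeries.coeff (R := K) (k:ℕ))).quotKerEquivOfSurjective
    (coeffs_surj K n)
  rw [ker_coeffs] at e2
  rw [e1.finrank_eq, e2.finrank_eq, Module.finrank_fintype_fun_eq_card, Fintype.card_fin]

lemma finrank_quot_of_order (g : PowerSeries K) (n : ℕ)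
    (h1 : ∀ m < n, coeff m g = 0) (h2 : coeff n g ≠ 0) :
    Module.finrank K (PowerSeries K ⧸ Ideal.span {g}) = n := by
  have hdvd : (X:PowerSeries K)^n ∣ g := X_pow_dvd_iff.mpr h1
  obtain ⟨u, hu⟩ := hdvd
  have hcu : constantCoeff u ≠ 0 := by
    intro h0
    apply h2
    rw [hu, coeff_X_pow_mul', if_pos le_rfl]
    simpa using h0
  have hunit : IsUnit u := isUnit_iff_constantCoeff.mpr (by simpa using hcu.isUnit)
  have : Ideal.span {g} = Ideal.span {(X:PowerSeries K)^n} := by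
    rw [Ideal.span_singleton_eq_span_singleton]
    exact (Associated.symm ⟨hunit.unit, hu.symm⟩)
  rw [this, finrank_quot_X_pow]

lemma not_finite_powerSeries : ¬ Module.Finite K (PowerSeries K) := by
  intro h
  have : IsNoetherian K (PowerSeries K) := by infer_instance
  have hinj : Function.Injective
      ((Polynomial.coeToPowerSeries.algHom (A := K) (R := K)).toLinearMap) := by
    intro a b hab
    simpa [Polynomial.coeToPowerSeries.algHom_apply, Polynomial.coe_inj] using hab
  have := Module.Finite.of_injective _ hinj
  exact Polynomial.not_finite this

lemma deriv_ne_zero (f : PowerSeries K)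
    (hfin : Module.Finite K (PowerSeries K ⧸ Ideal.span {f.derivativeFun})) :
    f.derivativeFun ≠ 0 := by
  intro h0
  apply not_finite_powerSeries K
  have hspan : Ideal.span {f.derivativeFun} = ⊥ := by
    rw [h0, Ideal.span_singleton_eq_bot]
  rw [hspan] at hfin
  have e1 := (Submodule.Quotient.restrictScalarsEquiv K ((⊥ : Ideal (PowerSeries K)))).symm
  have hbot : ((⊥ : Ideal (PowerSeries K)).restrictScalars K) = ⊥ := by
    ext x; simp
  rw [hbot] at e1
  have e2 := (Submodule.quotEquivOfEqBot (⊥ : Submodule K (PowerSeries K)) rfl)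
  exact Module.Finite.equiv (e1.trans e2)

noncomputable def piBotEquiv {ι : Type*} (S : Set ι) [DecidablePred (· ∈ S)] :
    (Submodule.pi S fun _ : ι => (⊥ : Submodule K K)) ≃ₗ[K] ({i : ι // i ∉ S} → K) where
  toFun x j := x.1 j.1
  map_add' x y := rfl
  map_smul' c x := rfl
  invFun y := ⟨fun i => if h : i ∈ S then 0 else y ⟨i, h⟩, by
    intro i hi
    simp [hi]⟩
  left_inv x := by
    ext i
    by_cases h : i ∈ S
    · simp only [h, dif_pos]
      exact (x.2 i h).symm
    · simp [h]
  right_inv y := by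
    ext j
    simp [j.2]

lemma finrank_piBot {ι : Type*} [Fintype ι] (S : Set ι) [DecidablePred (· ∈ S)] :
    Module.finrank K (Submodule.pi S fun _ : ι => (⊥ : Submodule K K))
      = Fintype.card {i : ι // i ∉ S} := by
  rw [(piBotEquiv K S).finrank_eq, Module.finrank_fintype_fun_eq_card]

lemma card_div (μ p : ℕ) :
    Fintype.card {i : Fin μ // p ∣ ((i:ℕ)+1)} = μ / p := by
  classical
  rw [Fintype.card_subtype]
  rw [← Nat.Ioc_filter_dvd_card_eq_div μ p]
  refine Finset.card_nbij (fun i => (i:ℕ)+1) ?_ ?_ ?_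
  · intro a ha
    simp only [Finset.mem_coe, Finset.mem_filter, Finset.mem_Ioc, Finset.mem_univ, true_and] at ha ⊢
    exact ⟨⟨Nat.succ_pos _, a.2⟩, ha⟩
  · intro a ha b hb hab
    have h' : (a:ℕ)+1 = (b:ℕ)+1 := hab
    exact Fin.ext (by omega)
  · intro b hb
    simp only [Finset.mem_coe, Finset.mem_filter, Finset.mem_Ioc] at hb
    refine ⟨⟨b-1, by omega⟩, ?_, ?_⟩
    · simp only [Finset.mem_coe, Finset.mem_filter, Finset.mem_univ, true_and]
      convert hb.2 using 2; omega
    · simp; omega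

lemma coeff_sum_aux (μ : ℕ) (t : Fin μ → K) (n : ℕ) :
    coeff (n+1) (∑ i, C (t i) * X^((i:ℕ)+1)) = if h : n < μ then t ⟨n, h⟩ else 0 := by
  rw [map_sum]
  simp only [coeff_C_mul, coeff_X_pow]
  split_ifs with h
  · rw [Finset.sum_eq_single (⟨n, h⟩ : Fin μ)]
    · simp
    · intro b _ hb
      have hne : ¬ (n+1 = (b:ℕ)+1) := by
        simp only [ne_eq, Fin.ext_iff] at hb
        omega
      rw [if_neg hne, mul_zero]
    · simp
  · apply Finset.sum_eq_zero
    intro i _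
    have hi := i.2
    have hne : ¬ (n+1 = (i:ℕ)+1) := by omega
    rw [if_neg hne, mul_zero]

lemma coeff_derivativeFun_aux (f : PowerSeries K) (n : ℕ) :
    coeff n f.derivativeFun = coeff (n + 1) f * (n + 1) := coeff_derivative f n

end Aux

theorem stmt_17 (K : Type*) [Field K] [IsAlgClosed K] (p : ℕ) (hp : p.Prime) [CharP K p]
    (f : PowerSeries K) (hf0 : constantCoeff f = 0) (hfin : MilnorFinite K f)
    (μ : ℕ) (hμ : μ = milnor K f) :
    {t : Fin μ → K | milnor K (f + ∑ i, C (t i) * X ^ ((i : ℕ) + 1)) = μ}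
        = ↑(Submodule.pi {i : Fin μ | ¬ p ∣ ((i : ℕ) + 1)} fun _ => (⊥ : Submodule K K)) ∧
      Module.finrank K
        (Submodule.pi {i : Fin μ | ¬ p ∣ ((i : ℕ) + 1)} fun _ => (⊥ : Submodule K K))
        = μ / p := by
  classical
  have hfin' : Module.Finite K (PowerSeries K ⧸ Ideal.span {f.derivativeFun}) := hfin
  have hne : f.derivativeFun ≠ 0 := deriv_ne_zero K f hfin'
  have hex : ∃ n, coeff n f.derivativeFun ≠ 0 := by
    by_contra h
    push_neg at h
    exact hne (PowerSeries.ext fun n => by simpa using h n)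
  have h2 : coeff (Nat.find hex) f.derivativeFun ≠ 0 := Nat.find_spec hex
  have h1 : ∀ m < Nat.find hex, coeff m f.derivativeFun = 0 := fun m hm =>
    not_not.mp (Nat.find_min hex hm)
  have hμn : μ = Nat.find hex := by
    rw [hμ]
    exact finrank_quot_of_order K _ _ h1 h2
  rw [← hμn] at h1 h2
  -- key coefficient formula for the derivative of the deformed series
  have key : ∀ (t : Fin μ → K) (m : ℕ),
      coeff m (f + ∑ i, C (t i) * X ^ ((i : ℕ) + 1)).derivativeFun
        = (coeff (m+1) f + if h : m < μ then t ⟨m, h⟩ else 0) * ((m+1 : ℕ) : K) := by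
    intro t m
    rw [coeff_derivativeFun_aux, map_add, coeff_sum_aux]
    push_cast
    ring
  have hcast : ∀ m : ℕ, ¬ p ∣ (m+1) → ((m : K) + 1) ≠ 0 := by
    intro m hm h0
    apply hm
    apply (CharP.cast_eq_zero_iff K p (m+1)).mp
    push_cast
    exact h0
  constructor
  · ext t
    simp only [Set.mem_setOf_eq, SetLike.mem_coe, Submodule.mem_pi, Submodule.mem_bot,
      Set.mem_setOf_eq]
    constructor
    · intro hmil i hi
      by_contra h0
      have hexQ : ∃ n, ∃ h : n < μ, ¬ p ∣ (n+1) ∧ t ⟨n, h⟩ ≠ 0 :=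
        ⟨(i : ℕ), i.2, hi, by simpa using h0⟩
      obtain ⟨hjμ, hjp, hjt⟩ := Nat.find_spec hexQ
      set j := Nat.find hexQ with hj
      have hlow : ∀ m < j, coeff m (f + ∑ i, C (t i) * X ^ ((i : ℕ) + 1)).derivativeFun
          = 0 := by
        intro m hm
        rw [key]
        by_cases hdvd : p ∣ (m+1)
        · rw [(CharP.cast_eq_zero_iff K p (m+1)).mpr hdvd, mul_zero]
        · have hmμ : m < μ := lt_trans hm hjμ
          rw [dif_pos hmμ]
          have hzero : t ⟨m, hmμ⟩ = 0 := by
            by_contra ht0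
            exact Nat.find_min hexQ hm ⟨hmμ, hdvd, ht0⟩
          rw [hzero, add_zero, Nat.cast_add, Nat.cast_one, ← coeff_derivativeFun_aux]
          exact h1 m hmμ
      have htop : coeff j (f + ∑ i, C (t i) * X ^ ((i : ℕ) + 1)).derivativeFun ≠ 0 := by
        rw [key, dif_pos hjμ, add_mul, Nat.cast_add, Nat.cast_one, ← coeff_derivativeFun_aux,
          h1 j hjμ, zero_add]
        exact mul_ne_zero hjt (hcast j hjp)
      have : milnor K (f + ∑ i, C (t i) * X ^ ((i : ℕ) + 1)) = j :=
        finrank_quot_of_order K _ j hlow htop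
      omega
    · intro ht
      have hderiv : (f + ∑ i, C (t i) * X ^ ((i : ℕ) + 1)).derivativeFun
          = f.derivativeFun := by
        ext m
        rw [key, coeff_derivativeFun_aux, add_mul]
        have : (if h : m < μ then t ⟨m, h⟩ else 0) * ((m+1 : ℕ) : K) = 0 := by
          by_cases hdvd : p ∣ (m+1)
          · rw [(CharP.cast_eq_zero_iff K p (m+1)).mpr hdvd, mul_zero]
          · split_ifs with h
            · rw [ht ⟨m, h⟩ hdvd, zero_mul]
            · rw [zero_mul]
        rw [this, add_zero, Nat.cast_add, Nat.cast_one]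
      rw [milnor, hderiv, ← milnor, ← hμ]
  · rw [finrank_piBot K _, ← card_div μ p]
    apply Fintype.card_congr
    apply Equiv.subtypeEquivRight
    intro i
    simp [Set.mem_setOf_eq, not_not]
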